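/- For every s with 1 < s < 2, every t ≥ 0, and every r with 0 ≤ r ≤ t+1, one has (t+2−(s−1)r)(t+2+r)^{s−1} ≥ (t+2−r)^{s−1}(t+2+(s−1)r). Equivalently, for every x ∈ [0,1) and s ∈ (1,2), (1−(s−1)x)(1+x)^{s−1} ≥ (1−x)^{s−1}(1+(s−1)x). -/

import Mathlib

open Real Set

private lemma norm_ineq (x σ : ℝ) (hx0 : 0 ≤ x) (hx1 : x < 1) (hσ0 : 0 < σ) (hσ1 : σ < 1) :
    (1 - x) ^ σ * (1 + σ * x) ≤ (1 - σ * x) * (1 + x) ^ σ := by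
  set f : ℝ → ℝ := fun y => (1 - σ * y) * (1 + y) ^ σ - (1 + σ * y) * (1 - y) ^ σ with hf
  have hder : ∀ y ∈ Ioo (-1 : ℝ) 1, HasDerivAt f
      (-σ * (1 + y) ^ σ + (1 - σ * y) * (σ * (1 + y) ^ (σ - 1))
        - (σ * (1 - y) ^ σ + (1 + σ * y) * (-(σ * (1 - y) ^ (σ - 1))))) y := by
    intro y hy
    obtain ⟨hy1, hy2⟩ := hy
    have hp : (0:ℝ) < 1 + y := by linarith
    have hm : (0:ℝ) < 1 - y := by linarith
    have h1 : HasDerivAt (fun y : ℝ => (1 + y) ^ σ) (σ * (1 + y) ^ (σ - 1)) y := by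
      have := (Real.hasDerivAt_rpow_const (x := 1 + y) (p := σ) (Or.inl hp.ne')).comp y
        ((hasDerivAt_id y).const_add 1)
      simpa [Function.comp_def] using this
    have h2 : HasDerivAt (fun y : ℝ => (1 - y) ^ σ) (-(σ * (1 - y) ^ (σ - 1))) y := by
      have := (Real.hasDerivAt_rpow_const (x := 1 - y) (p := σ) (Or.inl hm.ne')).comp y
        ((hasDerivAt_id y).const_sub 1)
      simpa [Function.comp_def] using this
    have h3 : HasDerivAt (fun y : ℝ => 1 - σ * y) (-σ) y := by
      simpa using ((hasDerivAt_id y).const_mul σ).const_sub 1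
    have h4 : HasDerivAt (fun y : ℝ => 1 + σ * y) σ y := by
      simpa using ((hasDerivAt_id y).const_mul σ).const_add 1
    exact (h3.mul h1).sub (h4.mul h2)
  have hsub : Icc (0:ℝ) x ⊆ Ioo (-1:ℝ) 1 := fun y hy =>
    ⟨by linarith [hy.1], by linarith [hy.2]⟩
  have hcont : ContinuousOn f (Icc 0 x) := fun y hy =>
    ((hder y (hsub hy)).differentiableAt).continuousAt.continuousWithinAt
  have hmono : MonotoneOn f (Icc 0 x) := by
    apply monotoneOn_of_deriv_nonneg (convex_Icc 0 x) hcont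
    · intro y hy
      have hy' : y ∈ Ioo (-1:ℝ) 1 := hsub (interior_subset hy)
      exact ((hder y hy').differentiableAt).differentiableWithinAt
    · intro y hy
      rw [interior_Icc] at hy
      have hy' : y ∈ Ioo (-1:ℝ) 1 := hsub ⟨hy.1.le, hy.2.le⟩
      obtain ⟨hy1, hy2⟩ := hy'
      have hp : (0:ℝ) < 1 + y := by linarith
      have hm : (0:ℝ) < 1 - y := by linarith
      rw [(hder y ⟨hy1, hy2⟩).deriv]
      have e1 : (1 + y) ^ σ = (1 + y) ^ (σ - 1) * (1 + y) := by
        rw [← Real.rpow_add_one hp.ne' (σ - 1)]; ring_nf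
      have e2 : (1 - y) ^ σ = (1 - y) ^ (σ - 1) * (1 - y) := by
        rw [← Real.rpow_add_one hm.ne' (σ - 1)]; ring_nf
      rw [e1, e2]
      have hle : (1 + y) ^ (σ - 1) ≤ (1 - y) ^ (σ - 1) :=
        Real.rpow_le_rpow_of_nonpos hm (by linarith [hy.1]) (by linarith)
      have hy0 : 0 ≤ y := hy.1.le
      have eq : -σ * ((1 + y) ^ (σ - 1) * (1 + y)) + (1 - σ * y) * (σ * (1 + y) ^ (σ - 1))
          - (σ * ((1 - y) ^ (σ - 1) * (1 - y)) + (1 + σ * y) * -(σ * (1 - y) ^ (σ - 1)))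
          = σ * (1 + σ) * (y * ((1 - y) ^ (σ - 1) - (1 + y) ^ (σ - 1))) := by ring
      rw [eq]
      exact mul_nonneg (mul_nonneg hσ0.le (by linarith)) (mul_nonneg hy0 (sub_nonneg.mpr hle))
  have h0 : f 0 = 0 := by simp [hf]
  have hx : f 0 ≤ f x := hmono (left_mem_Icc.mpr hx0) (right_mem_Icc.mpr hx0) hx0
  rw [h0] at hx
  simp only [hf] at hx
  linarith

theorem taylor_inequality :
    (∀ s t r : ℝ, 1 < s → s < 2 → 0 ≤ t → 0 ≤ r → r ≤ t + 1 →
      (t + 2 - r) ^ (s - 1) * (t + 2 + (s - 1) * r)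
        ≤ (t + 2 - (s - 1) * r) * (t + 2 + r) ^ (s - 1)) ∧
    (∀ x s : ℝ, 0 ≤ x → x < 1 → 1 < s → s < 2 →
      (1 - x) ^ (s - 1) * (1 + (s - 1) * x)
        ≤ (1 - (s - 1) * x) * (1 + x) ^ (s - 1)) := by
  constructor
  · intro s t r hs1 hs2 ht hr hrt
    have hc : (0:ℝ) < t + 2 := by linarith
    set x := r / (t + 2) with hxdef
    have hx0 : 0 ≤ x := div_nonneg hr hc.le
    have hx1 : x < 1 := (div_lt_one hc).mpr (by linarith)
    have key := norm_ineq x (s - 1) hx0 hx1 (by linarith) (by linarith)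
    have er : r = (t + 2) * x := by rw [hxdef]; field_simp
    have e1 : t + 2 - r = (t + 2) * (1 - x) := by rw [er]; ring
    have e2 : t + 2 + r = (t + 2) * (1 + x) := by rw [er]; ring
    have e3 : t + 2 + (s - 1) * r = (t + 2) * (1 + (s - 1) * x) := by rw [er]; ring
    have e4 : t + 2 - (s - 1) * r = (t + 2) * (1 - (s - 1) * x) := by rw [er]; ring
    rw [e1, e2, e3, e4, Real.mul_rpow hc.le (by linarith), Real.mul_rpow hc.le (by linarith)]
    have hcp : 0 < (t + 2) ^ (s - 1) := Real.rpow_pos_of_pos hc (s - 1)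
    calc (t + 2) ^ (s - 1) * (1 - x) ^ (s - 1) * ((t + 2) * (1 + (s - 1) * x))
        = ((t + 2) ^ (s - 1) * (t + 2)) * ((1 - x) ^ (s - 1) * (1 + (s - 1) * x)) := by ring
      _ ≤ ((t + 2) ^ (s - 1) * (t + 2)) * ((1 - (s - 1) * x) * (1 + x) ^ (s - 1)) := by
          exact mul_le_mul_of_nonneg_left key (by positivity)
      _ = (t + 2) * (1 - (s - 1) * x) * ((t + 2) ^ (s - 1) * (1 + x) ^ (s - 1)) := by ring
  · intro x s hx0 hx1 hs1 hs2
    exact norm_ineq x (s - 1) hx0 hx1 (by linarith) (by linarith)
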